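/- (Markovian structure of finite-horizon solutions) Assume X is a Markov chain with transition matrices A_t, let f be a Markovian driver, f(ω,t,y,z) = f̃(X_t(ω),t,y,z), satisfying: (i) for any adapted Y and any Z ∼_M Z', f(ω,t,Y_t,Z_t) = f(ω,t,Y_t,Z'_t) a.s. for all t; (ii) for any z, t and almost all ω, y ↦ y − f(ω,t,y,z) is a bijection ℝ → ℝ. Suppose ξ = φ(X_T) for a deterministic function φ : S → ℝ, and let (Y,Z) be the unique solution of the finite horizon BSDE Y_t − Σ_{t≤u<T} f(ω,u,Y_u,Z_u) + Σ_{t≤u<T} Z_uᵀM_{u+1} = ξ. Then there exists a deterministic function v : {0,1,…,T} × S → ℝ such that for each t, Y_t = v(t,X_t) a.s. and Z_t may be chosen (within its ∼_{M_{t+1}}-class) with e_kᵀZ_t = v(t+1,e_k) for all e_k ∈ S. Moreover, writing v_{t+1} ∈ ℝ^N for the vector with entries e_kᵀv_{t+1} = v(t+1,e_k), the function v satisfies v(t,e_k) − f̃(e_k,t,v(t,e_k),v_{t+1}) − v_{t+1}ᵀA_te_k = 0 for all t ∈ {0,…,T−1} and all e_k ∈ S with P(X_t = e_k) > 0. -/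

import Mathlib

open MeasureTheory Finset Filter

noncomputable section

namespace DiscreteEBSDE

variable {Ω : Type*} {mΩ : MeasurableSpace Ω} {N : ℕ}

/-- The standard basis vector `e i` of `ℝ^N`. -/
def e (N : ℕ) (i : Fin N) : Fin N → ℝ := Pi.single i 1

/-- The Euclidean inner product on `ℝ^N`. -/
def dotR {N : ℕ} (z w : Fin N → ℝ) : ℝ := ∑ i, z i * w i

/-- The process `X` takes values in the standard basis of `ℝ^N`. -/
def BasisValued (X : ℕ → Ω → (Fin N → ℝ)) : Prop := ∀ t ω, ∃ i, X t ω = e N i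

/-- The σ-algebra generated by `X 0, …, X t`. -/
def natSigma (X : ℕ → Ω → (Fin N → ℝ)) (t : ℕ) : MeasurableSpace Ω :=
  ⨆ s ∈ Set.Iic t, MeasurableSpace.comap (X s) inferInstance

/-- `F` is the `P`-completion of the natural filtration of `X`:
a set is `F t`-measurable iff it agrees with a set of the natural σ-algebra up to a
`P`-null symmetric difference. -/
def IsCompletedNaturalFiltration (P : Measure Ω) (X : ℕ → Ω → (Fin N → ℝ))
    (F : Filtration ℕ mΩ) : Prop :=
  ∀ (t : ℕ) (A : Set Ω), MeasurableSet[F t] A ↔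
    ∃ B : Set Ω, MeasurableSet[natSigma X t] B ∧ P (symmDiff A B) = 0

/-- The martingale difference `M (t+1) = X (t+1) - E[X (t+1) | F t]` (componentwise). -/
def Mdiff (P : Measure Ω) (F : Filtration ℕ mΩ) (X : ℕ → Ω → (Fin N → ℝ)) (t : ℕ)
    (ω : Ω) : Fin N → ℝ :=
  fun i => X (t + 1) ω i - (P[(fun ω' => X (t + 1) ω' i)|F t]) ω

/-- The conditional second moment `‖Z‖²_{M_{t+1}} = E[(Zᵀ M_{t+1})² | F t]`. -/
def seminormSq (P : Measure Ω) (F : Filtration ℕ mΩ) (X : ℕ → Ω → (Fin N → ℝ))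
    (t : ℕ) (Z : Ω → Fin N → ℝ) : Ω → ℝ :=
  P[(fun ω => (dotR (Z ω) (Mdiff P F X t ω)) ^ 2)|F t]

/-- The stochastic seminorm `‖Z‖_{M_{t+1}}`. -/
def mSeminorm (P : Measure Ω) (F : Filtration ℕ mΩ) (X : ℕ → Ω → (Fin N → ℝ))
    (t : ℕ) (Z : Ω → Fin N → ℝ) (ω : Ω) : ℝ :=
  Real.sqrt (seminormSq P F X t Z ω)

/-- `Z ∼_{M_{t+1}} Z'`, i.e. `‖Z - Z'‖_{M_{t+1}} = 0` a.s. -/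
def equivMt (P : Measure Ω) (F : Filtration ℕ mΩ) (X : ℕ → Ω → (Fin N → ℝ)) (t : ℕ)
    (Z Z' : Ω → Fin N → ℝ) : Prop :=
  seminormSq P F X t (fun ω => Z ω - Z' ω) =ᵐ[P] 0

/-- `Z ∼_M Z'`. -/
def equivM (P : Measure Ω) (F : Filtration ℕ mΩ) (X : ℕ → Ω → (Fin N → ℝ))
    (Z Z' : ℕ → Ω → Fin N → ℝ) : Prop :=
  ∀ t, equivMt P F X t (Z t) (Z' t)

/-- A driver `f(ω,t,y,z)` is adapted if `(ω,y,z) ↦ f(ω,t,y,z)` is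
`F t ⊗ B(ℝ) ⊗ B(ℝ^N)`-measurable for every `t`. -/
def DriverAdapted (F : Filtration ℕ mΩ) (f : Ω → ℕ → ℝ → (Fin N → ℝ) → ℝ) : Prop :=
  ∀ t : ℕ, Measurable[(F t).prod inferInstance]
    fun p : Ω × (ℝ × (Fin N → ℝ)) => f p.1 t p.2.1 p.2.2

/-- A column-stochastic transition matrix. -/
def IsTransMat {n : ℕ} (A : Matrix (Fin n) (Fin n) ℝ) : Prop :=
  (∀ i j, 0 ≤ A i j) ∧ ∀ j, ∑ i, A i j = 1

/-- `X` is a Markov chain with transition matrices `A t`; since `X` is valued in the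
standard basis this is equivalent to `E[X (t+1) | F t] = (A t) (X t)` a.s. -/
def IsMarkovChain (P : Measure Ω) (F : Filtration ℕ mΩ) (X : ℕ → Ω → (Fin N → ℝ))
    (A : ℕ → Matrix (Fin N) (Fin N) ℝ) : Prop :=
  (∀ t, IsTransMat (A t)) ∧
    ∀ (t : ℕ) (i : Fin N),
      (P[(fun ω => X (t + 1) ω i)|F t]) =ᵐ[P] fun ω => (A t).mulVec (X t ω) i

/-- The atom of `F t` containing `ω₀` (the set of paths agreeing with `ω₀` up to time `t`). -/
def pathAtom (X : ℕ → Ω → (Fin N → ℝ)) (t : ℕ) (ω₀ : Ω) : Set Ω :=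
  {ω' | ∀ s ≤ t, X s ω' = X s ω₀}

/-- `min_{i ∈ J_t^F} (z - z')ᵀ(e_i - E[X_{t+1} | F_t])` where `F` is the atom of `ω₀`
 at time `t` and `J_t^F = {i : P(X_{t+1} = e_i | F) > 0}`. -/
def minJump (P : Measure Ω) (F : Filtration ℕ mΩ) (X : ℕ → Ω → (Fin N → ℝ))
    (t : ℕ) (ω₀ : Ω) (z z' : Fin N → ℝ) (ω : Ω) : ℝ :=
  sInf {r : ℝ | ∃ i : Fin N,
    0 < P ({ω' | X (t + 1) ω' = e N i} ∩ pathAtom X t ω₀) ∧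
    r = dotR (z - z') (fun j => e N i j - (P[(fun ω'' => X (t + 1) ω'' j)|F t]) ω)}

/-- The comparison condition of the change-of-measure proposition: on every atom `F` of
`F t`, `f(ω,t,y,z) - f(ω,t,y,z') > min_{i ∈ J_t^F}{(z-z')ᵀ(e_i - E[X_{t+1}|F_t])}`, unless
this minimum is `0`, in which case equality holds. -/
def ComparisonCondition (P : Measure Ω) (F : Filtration ℕ mΩ) (X : ℕ → Ω → (Fin N → ℝ))
    (f : Ω → ℕ → ℝ → (Fin N → ℝ) → ℝ) : Prop :=
  ∀ (t : ℕ) (y : ℝ) (z z' : Fin N → ℝ) (ω₀ : Ω), 0 < P (pathAtom X t ω₀) →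
    ∀ᵐ ω ∂P, ω ∈ pathAtom X t ω₀ →
      (minJump P F X t ω₀ z z' ω = 0 → f ω t y z - f ω t y z' = 0) ∧
      (minJump P F X t ω₀ z z' ω ≠ 0 →
        minJump P F X t ω₀ z z' ω < f ω t y z - f ω t y z')

/-- `f` is Lipschitz in `z` with constant `L`, w.r.t. the stochastic seminorm. -/
def DriverLipschitzNoY (P : Measure Ω) (F : Filtration ℕ mΩ) (X : ℕ → Ω → (Fin N → ℝ))
    (L : ℝ) (f : Ω → ℕ → (Fin N → ℝ) → ℝ) : Prop :=
  ∀ (t : ℕ) (Zt Z't : Ω → Fin N → ℝ),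
    StronglyMeasurable[F t] Zt → StronglyMeasurable[F t] Z't →
    ∀ᵐ ω ∂P, |f ω t (Zt ω) - f ω t (Z't ω)| ≤
      L * mSeminorm P F X t (fun ω' => Zt ω' - Z't ω') ω

/-- `(Y,Z)` is an adapted solution of the finite horizon BSDE with driver `f`,
horizon `T` and terminal condition `ξ`. -/
def SolvesFiniteBSDE (P : Measure Ω) (F : Filtration ℕ mΩ) (X : ℕ → Ω → (Fin N → ℝ))
    (f : Ω → ℕ → ℝ → (Fin N → ℝ) → ℝ) (T : ℕ) (ξ : Ω → ℝ)
    (Y : ℕ → Ω → ℝ) (Z : ℕ → Ω → Fin N → ℝ) : Prop :=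
  Adapted F Y ∧ Adapted F Z ∧
    ∀ t ≤ T, ∀ᵐ ω ∂P,
      Y t ω - ∑ u ∈ Finset.Ico t T, f ω u (Y u ω) (Z u ω) +
        ∑ u ∈ Finset.Ico t T, dotR (Z u ω) (Mdiff P F X u ω) = ξ ω

/-- `(Y,Z)` is an adapted solution of the infinite-horizon discounted BSDE
with discount rate `α` and driver `f` (independent of `y`). -/
def SolvesDiscountedBSDE (P : Measure Ω) (F : Filtration ℕ mΩ) (X : ℕ → Ω → (Fin N → ℝ))
    (α : ℝ) (f : Ω → ℕ → (Fin N → ℝ) → ℝ)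
    (Y : ℕ → Ω → ℝ) (Z : ℕ → Ω → Fin N → ℝ) : Prop :=
  Adapted F Y ∧ Adapted F Z ∧
    ∀ t T : ℕ, t < T → ∀ᵐ ω ∂P,
      Y T ω = Y t ω - ∑ u ∈ Finset.Ico t T, (f ω u (Z u ω) - α * Y u ω) +
        ∑ u ∈ Finset.Ico t T, dotR (Z u ω) (Mdiff P F X u ω)

/-- `(Y,Z,lam)` solves the Ergodic BSDE with Markovian driver `f`. -/
def SolvesEBSDE (P : Measure Ω) (F : Filtration ℕ mΩ) (X : ℕ → Ω → (Fin N → ℝ))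
    (f : (Fin N → ℝ) → (Fin N → ℝ) → ℝ) (Y : ℕ → Ω → ℝ) (Z : ℕ → Ω → Fin N → ℝ)
    (lam : ℝ) : Prop :=
  ∀ t T : ℕ, t < T → ∀ᵐ ω ∂P,
    Y T ω = Y t ω - ∑ u ∈ Finset.Ico t T, (f (X u ω) (Z u ω) - lam) +
      ∑ u ∈ Finset.Ico t T, dotR (Z u ω) (Mdiff P F X u ω)

/-- Ratio with the convention `0/0 := 1`. -/
def balRatio (a b : ℝ) : ℝ := if a = 0 ∧ b = 0 then 1 else a / b

/-- The driver `f(ω,t,y,z)` is `γ`-balanced. -/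
def IsGammaBalanced (P : Measure Ω) (F : Filtration ℕ mΩ) (X : ℕ → Ω → (Fin N → ℝ))
    (A : ℕ → Matrix (Fin N) (Fin N) ℝ) (γ : ℝ)
    (f : Ω → ℕ → ℝ → (Fin N → ℝ) → ℝ) : Prop :=
  ∃ ψ : Ω → ℕ → (Fin N → ℝ) → (Fin N → ℝ) → (Fin N → ℝ),
    (∀ t : ℕ, Measurable[(F t).prod inferInstance]
      fun p : Ω × ((Fin N → ℝ) × (Fin N → ℝ)) => ψ p.1 t p.2.1 p.2.2) ∧
    ∀ (t : ℕ) (y : ℝ) (z z' : Fin N → ℝ), ∀ᵐ ω ∂P,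
      f ω t y z - f ω t y z' =
          dotR (z - z') (fun i => ψ ω t z z' i - (A t).mulVec (X t ω) i) ∧
        (∀ i, balRatio (ψ ω t z z' i) ((A t).mulVec (X t ω) i) ∈ Set.Icc γ γ⁻¹) ∧
        ∑ i, ψ ω t z z' i = 1

/-- The driver `f(ω,t,z)` (independent of `y`) is `γ`-balanced. -/
def IsGammaBalancedNoY (P : Measure Ω) (F : Filtration ℕ mΩ) (X : ℕ → Ω → (Fin N → ℝ))
    (A : ℕ → Matrix (Fin N) (Fin N) ℝ) (γ : ℝ)
    (f : Ω → ℕ → (Fin N → ℝ) → ℝ) : Prop :=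
  ∃ ψ : Ω → ℕ → (Fin N → ℝ) → (Fin N → ℝ) → (Fin N → ℝ),
    (∀ t : ℕ, Measurable[(F t).prod inferInstance]
      fun p : Ω × ((Fin N → ℝ) × (Fin N → ℝ)) => ψ p.1 t p.2.1 p.2.2) ∧
    ∀ (t : ℕ) (z z' : Fin N → ℝ), ∀ᵐ ω ∂P,
      f ω t z - f ω t z' =
          dotR (z - z') (fun i => ψ ω t z z' i - (A t).mulVec (X t ω) i) ∧
        (∀ i, balRatio (ψ ω t z z' i) ((A t).mulVec (X t ω) i) ∈ Set.Icc γ γ⁻¹) ∧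
        ∑ i, ψ ω t z z' i = 1

/-- A probability vector on `Fin n`. -/
def IsProbVec {n : ℕ} (μ : Fin n → ℝ) : Prop := (∀ i, 0 ≤ μ i) ∧ ∑ i, μ i = 1

/-- Total variation distance between (signed) measures on a finite state space. -/
def tvDist {n : ℕ} (μ ν : Fin n → ℝ) : ℝ := (∑ x, |μ x - ν x|) / 2

/-- Uniform ergodicity of the chain induced by the column-stochastic matrix `A`. -/
def UniformlyErgodic {n : ℕ} (A : Matrix (Fin n) (Fin n) ℝ) : Prop :=
  ∃ π : Fin n → ℝ, IsProbVec π ∧ ∃ R ρ : ℝ, 0 < R ∧ 0 < ρ ∧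
    ∀ (t : ℕ) (μ : Fin n → ℝ), IsProbVec μ →
      tvDist ((A ^ t).mulVec μ) π ≤ R * Real.exp (-ρ * t)

section Aux

variable {Ω : Type*} {mΩ : MeasurableSpace Ω} {N : ℕ}

lemma dotR_e (z : Fin N → ℝ) (i : Fin N) : dotR z (e N i) = z i := by
  simp [dotR, e, Pi.single_apply, mul_ite]

lemma mulVec_e (A : Matrix (Fin N) (Fin N) ℝ) (j k : Fin N) :
    A.mulVec (e N k) j = A j k := by
  simp [Matrix.mulVec, dotProduct, e, Pi.single_apply, mul_ite]

lemma measurable_X {P : Measure Ω} {X : ℕ → Ω → Fin N → ℝ} {F : Filtration ℕ mΩ}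
    (hF : IsCompletedNaturalFiltration P X F) {s t : ℕ} (hst : s ≤ t) :
    Measurable[F t] (X s) := by
  intro S hS
  rw [hF t]
  refine ⟨X s ⁻¹' S, ?_, by simp [symmDiff_self]⟩
  have hle : MeasurableSpace.comap (X s) inferInstance ≤ natSigma X t := by
    exact le_iSup₂ (f := fun (u : ℕ) (_ : u ∈ Set.Iic t) =>
      MeasurableSpace.comap (X u) inferInstance) s hst
  exact hle _ ⟨S, hS, rfl⟩

/-- The basis-valued process has components in `{0,1}`. -/
lemma X_comp_mem {X : ℕ → Ω → Fin N → ℝ} (hX : BasisValued X) (s : ℕ) (ω : Ω) (j : Fin N) :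
    X s ω j = 0 ∨ X s ω j = 1 := by
  obtain ⟨i, hi⟩ := hX s ω
  rw [hi]
  by_cases h : j = i <;> simp [e, Pi.single_apply, h]

lemma X_eq_of_comp_ne {X : ℕ → Ω → Fin N → ℝ} (hX : BasisValued X) {s : ℕ} {ω : Ω}
    {j : Fin N} (h : X s ω j ≠ 0) : X s ω = e N j := by
  obtain ⟨i, hi⟩ := hX s ω
  rw [hi] at h ⊢
  by_cases hij : i = j
  · rw [hij]
  · exfalso; apply h; simp [e, Pi.single_apply, Ne.symm hij]

/-- Auxiliary backward recursion defining the value function `v` (index `n` is time to go). -/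
noncomputable def vAux (N : ℕ) (ftil : (Fin N → ℝ) → ℕ → ℝ → (Fin N → ℝ) → ℝ)
    (A : ℕ → Matrix (Fin N) (Fin N) ℝ) (φ : (Fin N → ℝ) → ℝ) (T : ℕ) : ℕ → Fin N → ℝ
  | 0 => fun k => φ (e N k)
  | n + 1 => fun k =>
      Function.invFun (fun y : ℝ => y - ftil (e N k) (T - (n + 1)) y (vAux N ftil A φ T n))
        (dotR (vAux N ftil A φ T n) ((A (T - (n + 1))).mulVec (e N k)))

end Aux
/-- **Markovian structure of finite-horizon BSDE solutions.** -/
theorem finite_horizon_markovian_solution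
    {Ω : Type*} {mΩ : MeasurableSpace Ω} {N : ℕ}
    (P : Measure Ω) [IsProbabilityMeasure P] (F : Filtration ℕ mΩ)
    (X : ℕ → Ω → (Fin N → ℝ)) (hX : BasisValued X)
    (hF : IsCompletedNaturalFiltration P X F)
    (A : ℕ → Matrix (Fin N) (Fin N) ℝ) (hA : IsMarkovChain P F X A)
    (T : ℕ) (hT : 0 < T)
    (ftil : (Fin N → ℝ) → ℕ → ℝ → (Fin N → ℝ) → ℝ)
    (hfAd : DriverAdapted F fun ω t y z => ftil (X t ω) t y z)
    (hf1 : ∀ (Y : ℕ → Ω → ℝ) (Z Z' : ℕ → Ω → Fin N → ℝ), Adapted F Y → Adapted F Z →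
      Adapted F Z' → equivM P F X Z Z' →
      ∀ t : ℕ, ∀ᵐ ω ∂P, ftil (X t ω) t (Y t ω) (Z t ω) = ftil (X t ω) t (Y t ω) (Z' t ω))
    (hf2 : ∀ (z : Fin N → ℝ) (t : ℕ), t < T →
      ∀ᵐ ω ∂P, Function.Bijective fun y : ℝ => y - ftil (X t ω) t y z)
    (φ : (Fin N → ℝ) → ℝ)
    (Y : ℕ → Ω → ℝ) (Z : ℕ → Ω → Fin N → ℝ)
    (hYZ : SolvesFiniteBSDE P F X (fun ω t y z => ftil (X t ω) t y z) T
      (fun ω => φ (X T ω)) Y Z) :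
    ∃ v : ℕ → Fin N → ℝ,
      (∀ t ≤ T, Y t =ᵐ[P] fun ω => dotR (v t) (X t ω)) ∧
      (∀ t < T, equivMt P F X t (Z t) fun _ => v (t + 1)) ∧
      ∀ t < T, ∀ k : Fin N, 0 < P {ω | X t ω = e N k} →
        v t k - ftil (e N k) t (v t k) (v (t + 1)) -
          dotR (v (t + 1)) ((A t).mulVec (e N k)) = 0 := by
  classical
  obtain ⟨hYad, hZad, hBSDE⟩ := hYZ
  set v : ℕ → Fin N → ℝ := fun t => vAux N ftil A φ T (T - t) with hv
  have hvT : ∀ k, v T k = φ (e N k) := by intro k; simp [hv, vAux]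
  have hvlt : ∀ t, t < T → v t = fun k =>
      Function.invFun (fun y : ℝ => y - ftil (e N k) t y (v (t + 1)))
        (dotR (v (t + 1)) ((A t).mulVec (e N k))) := by
    intro t ht
    have h1 : T - t = (T - (t + 1)) + 1 := by omega
    have h2 : T - ((T - (t + 1)) + 1) = t := by omega
    simp only [hv, h1, vAux, h2]
  -- basic measurability and integrability facts
  have hXmΩ : ∀ s : ℕ, Measurable (X s) := fun s =>
    (measurable_X hF (le_refl s)).mono (F.le s) le_rfl
  have hXjint : ∀ (s : ℕ) (j : Fin N), Integrable (fun ω => X s ω j) P := by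
    intro s j
    refine ⟨((measurable_pi_apply j).comp (hXmΩ s)).aestronglyMeasurable,
      HasFiniteIntegral.of_bounded (C := 1) (ae_of_all _ fun ω => ?_)⟩
    rcases X_comp_mem hX s ω j with h | h <;> simp [h]
  have hAnn : ∀ (s : ℕ) (j k : Fin N), 0 ≤ A s j k := fun s j k => (hA.1 s).1 j k
  have hA1 : ∀ (s : ℕ) (j k : Fin N), A s j k ≤ 1 := by
    intro s j k
    calc A s j k ≤ ∑ i, A s i k :=
          Finset.single_le_sum (fun i _ => hAnn s i k) (Finset.mem_univ j)
      _ = 1 := (hA.1 s).2 k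
  have hmvm : ∀ (t : ℕ) (j : Fin N),
      Measurable[F t] (fun ω => (A t).mulVec (X t ω) j) := by
    intro t j
    have heq : (fun ω => (A t).mulVec (X t ω) j) = fun ω => ∑ l, A t j l * X t ω l := by
      funext ω; simp [Matrix.mulVec, dotProduct]
    rw [heq]
    exact Finset.measurable_sum _ fun l _ =>
      measurable_const.mul ((measurable_pi_apply l).comp (measurable_X hF le_rfl))
  have hmvnn : ∀ (t : ℕ) (j : Fin N) (ω : Ω), 0 ≤ (A t).mulVec (X t ω) j := by
    intro t j ω
    obtain ⟨k, hk⟩ := hX t ω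
    rw [hk, mulVec_e]
    exact hAnn t j k
  have hmvint : ∀ (t : ℕ) (j : Fin N), Integrable (fun ω => (A t).mulVec (X t ω) j) P := by
    intro t j
    refine ⟨((hmvm t j).mono (F.le t) le_rfl).aestronglyMeasurable,
      HasFiniteIntegral.of_bounded (C := 1) (ae_of_all _ fun ω => ?_)⟩
    obtain ⟨k, hk⟩ := hX t ω
    rw [hk, mulVec_e, Real.norm_eq_abs, abs_of_nonneg (hAnn t j k)]
    exact hA1 t j k
  -- seminorm vanishing criterion
  have equivZero : ∀ (s : ℕ) (W : Ω → Fin N → ℝ),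
      (∀ᵐ ω ∂P, dotR (W ω) (Mdiff P F X s ω) = 0) →
      seminormSq P F X s W =ᵐ[P] 0 := by
    intro s W h
    have h2 : (fun ω => (dotR (W ω) (Mdiff P F X s ω)) ^ 2) =ᵐ[P] (0 : Ω → ℝ) :=
      h.mono fun ω hω => by simp [hω]
    refine (condExp_congr_ae h2).trans ?_
    rw [condExp_zero]
  -- the one-step analysis
  have step : ∀ t, t < T → ∀ w : Fin N → ℝ,
      Y (t+1) =ᵐ[P] (fun ω => dotR w (X (t+1) ω)) →
      (∀ᵐ ω ∂P, dotR (Z t ω - w) (Mdiff P F X t ω) = 0) ∧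
      (∀ᵐ ω ∂P, Y t ω - ftil (X t ω) t (Y t ω) w = dotR w ((A t).mulVec (X t ω))) := by
    intro t ht w h1
    have hstep : ∀ᵐ ω ∂P, Y t ω - ftil (X t ω) t (Y t ω) (Z t ω) +
        dotR (Z t ω) (Mdiff P F X t ω) = Y (t+1) ω := by
      filter_upwards [hBSDE t ht.le, hBSDE (t+1) ht] with ω e1 e2
      rw [Finset.sum_eq_sum_Ico_succ_bot ht, Finset.sum_eq_sum_Ico_succ_bot ht] at e1
      linarith
    have hMeq : ∀ᵐ ω ∂P, ∀ j, Mdiff P F X t ω j =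
        X (t+1) ω j - (A t).mulVec (X t ω) j := by
      rw [ae_all_iff]
      intro j
      filter_upwards [hA.2 t j] with ω hω
      simp only [Mdiff, hω]
    have transfer : ∀ (B : Set Ω), MeasurableSet[F t] B → ∀ j : Fin N,
        ∫ ω in B, (A t).mulVec (X t ω) j ∂P = ∫ ω in B, X (t+1) ω j ∂P := by
      intro B hB j
      rw [← setIntegral_condExp (F.le t) (hXjint (t+1) j) hB]
      refine setIntegral_congr_ae (F.le t _ hB) ?_
      filter_upwards [hA.2 t j] with ω hω _
      exact hω.symm
    have zero_on : ∀ (V : Ω → ℝ) (B : Set Ω), MeasurableSet B → Integrable V P →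
        (∀ ω, 0 ≤ V ω) → ∫ ω in B, V ω ∂P = 0 → ∀ᵐ ω ∂P, ω ∈ B → V ω = 0 := by
      intro V B hB hV hVnn h0
      have h := (integral_eq_zero_iff_of_nonneg_ae
        (ae_of_all _ hVnn : (0 : Ω → ℝ) ≤ᵐ[P.restrict B] V) hV.restrict).mp h0
      exact (ae_restrict_iff' hB).mp h
    -- unreachable states are a.s. not visited
    have hzero_unreach : ∀ᵐ ω ∂P, ∀ j,
        (A t).mulVec (X t ω) j = 0 → X (t+1) ω j = 0 := by
      rw [ae_all_iff]; intro j
      have hBm : MeasurableSet[F t] {ω | (A t).mulVec (X t ω) j = 0} :=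
        hmvm t j (measurableSet_singleton 0)
      have h0 : ∫ ω in {ω | (A t).mulVec (X t ω) j = 0}, X (t+1) ω j ∂P = 0 := by
        rw [← transfer _ hBm j]
        rw [setIntegral_congr_ae (F.le t _ hBm)
          (g := fun _ => (0:ℝ)) (ae_of_all _ fun ω hω => hω)]
        simp
      have := zero_on (fun ω => X (t+1) ω j) _ (F.le t _ hBm) (hXjint (t+1) j)
        (fun ω => by rcases X_comp_mem hX (t+1) ω j with h | h <;> simp [h]) h0
      exact this
    -- key identity on reachable states
    set G : Ω → ℝ := fun ω => Y t ω - ftil (X t ω) t (Y t ω) (Z t ω) -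
      dotR (Z t ω) ((A t).mulVec (X t ω)) with hG
    have hGm : Measurable[F t] G := by
      have hfm : Measurable[F t] (fun ω => ftil (X t ω) t (Y t ω) (Z t ω)) :=
        (hfAd t).comp (measurable_id.prodMk
          (((hYad t)).prodMk ((hZad t))))
      have hdm : Measurable[F t] (fun ω => dotR (Z t ω) ((A t).mulVec (X t ω))) := by
        have heq : (fun ω => dotR (Z t ω) ((A t).mulVec (X t ω))) =
            fun ω => ∑ l, Z t ω l * (A t).mulVec (X t ω) l := rfl
        rw [heq]
        exact Finset.measurable_sum _ fun l _ =>
          ((measurable_pi_apply l).comp (hZad t)).mul (hmvm t l)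
      exact (Measurable.sub (hYad t) hfm).sub hdm
    have hkey : ∀ᵐ ω ∂P, ∀ j, 0 < (A t).mulVec (X t ω) j →
        G ω + Z t ω j - w j = 0 := by
      rw [ae_all_iff]; intro j
      have claim : ∀ᵐ ω ∂P, X (t+1) ω = e N j → G ω + Z t ω j - w j = 0 := by
        filter_upwards [hstep, h1, hMeq] with ω hs h1' hM hXj
        have hZM : dotR (Z t ω) (Mdiff P F X t ω) =
            Z t ω j - dotR (Z t ω) ((A t).mulVec (X t ω)) := by
          simp only [dotR]
          rw [show ∑ l, Z t ω l * Mdiff P F X t ω l =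
              ∑ l, (Z t ω l * X (t+1) ω l - Z t ω l * (A t).mulVec (X t ω) l) from
            Finset.sum_congr rfl fun l _ => by rw [hM l]; ring]
          rw [Finset.sum_sub_distrib]
          congr 1
          rw [hXj]
          exact dotR_e (Z t ω) j
        have h1'' : Y (t+1) ω = w j := by rw [h1', hXj, dotR_e]
        simp only [hG]
        linarith [hs, hZM, h1'']
      set B := {ω | G ω + Z t ω j - w j ≠ 0} with hB
      have hBmF : MeasurableSet[F t] B := by
        have : Measurable[F t] fun ω => G ω + Z t ω j - w j :=
          (hGm.add ((measurable_pi_apply j).comp (hZad t))).sub measurable_const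
        exact (this (measurableSet_singleton 0)).compl
      have h0 : ∫ ω in B, X (t+1) ω j ∂P = 0 := by
        have hae : ∀ᵐ ω ∂P, ω ∈ B → X (t+1) ω j = 0 := by
          filter_upwards [claim] with ω hc hmem
          by_contra hne
          exact hmem (hc (X_eq_of_comp_ne hX hne))
        rw [setIntegral_congr_ae (F.le t _ hBmF) (g := fun _ => (0:ℝ))
          (hae.mono fun ω h hm => h hm)]
        simp
      have h0' : ∫ ω in B, (A t).mulVec (X t ω) j ∂P = 0 := by
        rw [transfer B hBmF j]; exact h0
      have hz := zero_on (fun ω => (A t).mulVec (X t ω) j) B (F.le t _ hBmF)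
        (hmvint t j) (hmvnn t j) h0'
      filter_upwards [hz] with ω hω hpos
      by_contra hne
      exact absurd (hω hne) (ne_of_gt hpos)
    -- part (a): the martingale increment of Z - w vanishes
    have hdot0 : ∀ᵐ ω ∂P, dotR (Z t ω - w) (Mdiff P F X t ω) = 0 := by
      filter_upwards [hMeq, hkey, hzero_unreach] with ω hM hk hu
      obtain ⟨i, hi⟩ := hX (t+1) ω
      obtain ⟨k, hkk⟩ := hX t ω
      have hipos : 0 < (A t).mulVec (X t ω) i := by
        rcases (hmvnn t i ω).lt_or_eq with h | h
        · exact h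
        · exfalso
          have := hu i h.symm
          rw [hi] at this
          simp [e, Pi.single_apply] at this
      have e1 : dotR (Z t ω - w) (Mdiff P F X t ω) =
          ∑ l, (Z t ω l - w l) * (X (t+1) ω l - (A t).mulVec (X t ω) l) := by
        simp only [dotR, Pi.sub_apply]
        exact Finset.sum_congr rfl fun l _ => by rw [hM l]
      have e2 : ∑ l, (Z t ω l - w l) * (X (t+1) ω l - (A t).mulVec (X t ω) l)
          = (∑ l, (Z t ω l - w l) * X (t+1) ω l) -
            ∑ l, (Z t ω l - w l) * (A t).mulVec (X t ω) l := by
        rw [← Finset.sum_sub_distrib]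
        exact Finset.sum_congr rfl fun l _ => by ring
      have e3 : ∑ l, (Z t ω l - w l) * X (t+1) ω l = Z t ω i - w i := by
        have := dotR_e (Z t ω - w) i
        simp only [dotR, Pi.sub_apply] at this
        rw [hi]; exact this
      have e4 : ∑ l, (Z t ω l - w l) * (A t).mulVec (X t ω) l =
          ∑ l, -(G ω) * (A t).mulVec (X t ω) l := by
        refine Finset.sum_congr rfl fun l _ => ?_
        rcases (hmvnn t l ω).lt_or_eq with hpos | hzero
        · have := hk l hpos
          rw [show Z t ω l - w l = -(G ω) by linarith]
        · rw [← hzero]; ring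
      have e5 : ∑ l, (A t).mulVec (X t ω) l = 1 := by
        rw [hkk]
        simp only [mulVec_e]
        exact (hA.1 t).2 k
      have hki := hk i hipos
      rw [e1, e2, e3, e4, ← Finset.mul_sum, e5]
      linarith
    refine ⟨hdot0, ?_⟩
    -- part (b): identify Y t via the driver at w
    have hZ'a : Adapted F (Function.update Z t fun _ => w) := by
      intro s; by_cases hst : s = t
      · subst hst; rw [Function.update_self]; exact measurable_const
      · rw [Function.update_of_ne hst]; exact hZad s
    have hequiv : equivM P F X Z (Function.update Z t fun _ => w) := by
      intro s
      by_cases hst : s = t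
      · subst hst
        rw [Function.update_self]
        exact equivZero s _ hdot0
      · rw [Function.update_of_ne hst]
        exact equivZero s _ (ae_of_all _ fun ω => by simp [dotR])
    have hfw : ∀ᵐ ω ∂P, ftil (X t ω) t (Y t ω) (Z t ω) = ftil (X t ω) t (Y t ω) w := by
      have := hf1 Y Z _ hYad hZad hZ'a hequiv t
      simpa [Function.update_self] using this
    filter_upwards [hstep, h1, hMeq, hdot0, hfw] with ω hs h1' hM hd hf'
    obtain ⟨i, hi⟩ := hX (t+1) ω
    have hsplit : dotR (Z t ω) (Mdiff P F X t ω) =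
        dotR (Z t ω - w) (Mdiff P F X t ω) + dotR w (Mdiff P F X t ω) := by
      simp only [dotR, Pi.sub_apply, ← Finset.sum_add_distrib]
      exact Finset.sum_congr rfl fun l _ => by ring
    have hwM : dotR w (Mdiff P F X t ω) = w i - dotR w ((A t).mulVec (X t ω)) := by
      simp only [dotR]
      rw [show ∑ l, w l * Mdiff P F X t ω l =
          ∑ l, (w l * X (t+1) ω l - w l * (A t).mulVec (X t ω) l) from
        Finset.sum_congr rfl fun l _ => by rw [hM l]; ring]
      rw [Finset.sum_sub_distrib]
      congr 1
      rw [hi]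
      exact dotR_e w i
    have h1'' : Y (t+1) ω = w i := by rw [h1', hi, dotR_e]
    rw [← hf']
    linarith
  -- backward induction
  have hsol : ∀ n t, t + n = T → Y t =ᵐ[P] fun ω => dotR (v t) (X t ω) := by
    intro n
    induction n with
    | zero =>
      intro t htT
      have hTt : t = T := by omega
      subst hTt
      filter_upwards [hBSDE t le_rfl] with ω hω
      simp only [Finset.Ico_self, Finset.sum_empty, sub_zero, add_zero] at hω
      obtain ⟨k, hk⟩ := hX t ω
      rw [hk, dotR_e, hvT k, ← hk]
      exact hω
    | succ n ih =>
      intro t htT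
      have ht : t < T := by omega
      have h1 := ih (t+1) (by omega)
      obtain ⟨hd0, hYrel⟩ := step t ht (v (t+1)) h1
      filter_upwards [hYrel, hf2 (v (t+1)) t ht] with ω hr hbij
      obtain ⟨k, hk⟩ := hX t ω
      rw [hk] at hr hbij
      have hvdef : v t k = Function.invFun
          (fun y : ℝ => y - ftil (e N k) t y (v (t + 1)))
          (dotR (v (t + 1)) ((A t).mulVec (e N k))) := by rw [hvlt t ht]
      have hsolv : (fun y : ℝ => y - ftil (e N k) t y (v (t + 1))) (v t k) =
          dotR (v (t + 1)) ((A t).mulVec (e N k)) := by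
        rw [hvdef]
        exact Function.invFun_eq (f := fun y : ℝ => y - ftil (e N k) t y (v (t + 1))) ⟨Y t ω, hr⟩
      have hYv : Y t ω = v t k := hbij.injective (hr.trans hsolv.symm)
      rw [hk, dotR_e]
      exact hYv
  refine ⟨v, ?_, ?_, ?_⟩
  · intro t htT
    exact hsol (T - t) t (by omega)
  · intro t ht
    have h1 := hsol (T - (t+1)) (t+1) (by omega)
    exact equivZero t _ (step t ht (v (t+1)) h1).1
  · intro t ht k hk
    have hne : P ({ω | X t ω = e N k} ∩
        {ω | Function.Bijective fun y : ℝ => y - ftil (X t ω) t y (v (t + 1))}) ≠ 0 := by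
      intro h0
      have hcompl : P {ω | ¬ Function.Bijective
          fun y : ℝ => y - ftil (X t ω) t y (v (t + 1))} = 0 := by
        have := hf2 (v (t+1)) t ht
        rwa [ae_iff] at this
      have hle2 : P {ω | X t ω = e N k} ≤
          P ({ω | X t ω = e N k} ∩
            {ω | Function.Bijective fun y : ℝ => y - ftil (X t ω) t y (v (t + 1))}) +
          P {ω | ¬ Function.Bijective fun y : ℝ => y - ftil (X t ω) t y (v (t + 1))} := by
        refine le_trans (measure_mono ?_) (measure_union_le _ _)
        intro ω hω
        by_cases hb : Function.Bijective fun y : ℝ => y - ftil (X t ω) t y (v (t + 1))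
        · exact Or.inl ⟨hω, hb⟩
        · exact Or.inr hb
      rw [h0, hcompl] at hle2
      simp only [add_zero, le_zero_iff] at hle2
      exact hk.ne' hle2
    obtain ⟨ω, hωk, hωb⟩ := nonempty_of_measure_ne_zero hne
    have hωb' : Function.Bijective fun y : ℝ => y - ftil (e N k) t y (v (t + 1)) := by
      have := hωb
      simp only [Set.mem_setOf_eq] at this
      rwa [hωk] at this
    have hvdef : v t k = Function.invFun
        (fun y : ℝ => y - ftil (e N k) t y (v (t + 1)))
        (dotR (v (t + 1)) ((A t).mulVec (e N k))) := by rw [hvlt t ht]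
    have heq := Function.invFun_eq
      (hωb'.surjective (dotR (v (t + 1)) ((A t).mulVec (e N k))))
    rw [← hvdef] at heq
    have heq' : v t k - ftil (e N k) t (v t k) (v (t + 1)) =
        dotR (v (t + 1)) ((A t).mulVec (e N k)) := heq
    linarith
end DiscreteEBSDE
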